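/- Strong consistency of the self-normalized importance-sampling estimator: almost surely, (∑_{i<n} W_i · f(X_i)) / (∑_{i<n} W_i) converges to 𝔼[W_0 · f(X_0)] / 𝔼[W_0] as n → ∞. -/

import Mathlib

open MeasureTheory ProbabilityTheory Filter Topology

/-- **Strong consistency of the self-normalized importance-sampling estimator.**
If `((X i, W i))` is an i.i.d. sequence in `E × ℝ` with `W 0 ≥ 0` a.s., `W 0` integrable,
`0 < 𝔼[W 0]`, and `f : E → ℝ` is measurable with `𝔼[W 0 * |f (X 0)|] < ∞`, then almost surely
`(∑_{i<n} W i * f (X i)) / (∑_{i<n} W i) → 𝔼[W 0 * f (X 0)] / 𝔼[W 0]`. -/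
theorem self_normalized_importance_sampling_strong_consistency
    {Ω E : Type*} [MeasurableSpace Ω] [MeasurableSpace E]
    (μ : Measure Ω) [IsProbabilityMeasure μ]
    (X : ℕ → Ω → E) (W : ℕ → Ω → ℝ)
    (hXmeas : ∀ i, Measurable (X i)) (hWmeas : ∀ i, Measurable (W i))
    (hindep : iIndepFun (fun i ω => (X i ω, W i ω)) μ)
    (hident : ∀ i, IdentDistrib (fun ω => (X i ω, W i ω)) (fun ω => (X 0 ω, W 0 ω)) μ μ)
    (hWnonneg : ∀ᵐ ω ∂μ, 0 ≤ W 0 ω)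
    (hWint : Integrable (W 0) μ)
    (hWpos : 0 < ∫ ω, W 0 ω ∂μ)
    (f : E → ℝ) (hf : Measurable f)
    (hWfint : Integrable (fun ω => W 0 ω * |f (X 0 ω)|) μ) :
    ∀ᵐ ω ∂μ, Tendsto
      (fun n : ℕ =>
        (∑ i ∈ Finset.range n, W i ω * f (X i ω)) / ∑ i ∈ Finset.range n, W i ω)
      atTop (𝓝 ((∫ ω, W 0 ω * f (X 0 ω) ∂μ) / ∫ ω, W 0 ω ∂μ)) := by
  -- g maps the pair to W * f(X), g2 maps to W
  set g : E × ℝ → ℝ := fun p => p.2 * f p.1 with hg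
  set g2 : E × ℝ → ℝ := fun p => p.2 with hg2
  have hgmeas : Measurable g := measurable_snd.mul (hf.comp measurable_fst)
  have hg2meas : Measurable g2 := measurable_snd
  set Y : ℕ → Ω → ℝ := fun i ω => W i ω * f (X i ω) with hY
  have hYmeas : ∀ i, Measurable (Y i) := fun i => (hWmeas i).mul (hf.comp (hXmeas i))
  -- integrability of Y 0
  have hYint : Integrable (Y 0) μ := by
    refine hWfint.mono' ((hYmeas 0).aestronglyMeasurable) ?_
    filter_upwards [hWnonneg] with ω hω
    simp [Y, Real.norm_eq_abs, abs_mul, abs_of_nonneg hω]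
  -- independence
  have hYindep : Pairwise (Function.onFun (IndepFun · · μ) Y) := by
    intro i j hij
    exact ((hindep.indepFun hij).comp hgmeas hgmeas : IndepFun (Y i) (Y j) μ)
  have hWindep : Pairwise (Function.onFun (IndepFun · · μ) W) := by
    intro i j hij
    exact ((hindep.indepFun hij).comp hg2meas hg2meas : IndepFun (W i) (W j) μ)
  have hYident : ∀ i, IdentDistrib (Y i) (Y 0) μ μ := fun i => (hident i).comp hgmeas
  have hWident : ∀ i, IdentDistrib (W i) (W 0) μ μ := fun i => (hident i).comp hg2meas
  have hA := strong_law_ae_real Y hYint hYindep hYident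
  have hB := strong_law_ae_real W hWint hWindep hWident
  filter_upwards [hA, hB] with ω hAω hBω
  have hBne : (∫ ω, W 0 ω ∂μ) ≠ 0 := ne_of_gt hWpos
  have := hAω.div hBω hBne
  apply this.congr'
  filter_upwards [eventually_ne_atTop 0] with n hn
  have hn' : (n : ℝ) ≠ 0 := Nat.cast_ne_zero.mpr hn
  simp only [Pi.div_apply]
  rw [div_div_div_cancel_right₀ hn']
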